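/- Let x₀ ∈ ℝ and let u be eleven times continuously differentiable on a neighborhood of x₀. Then, as h → 0⁺, (17/(24h))·(u(x₀+h) − u(x₀−h)) + (101/(600h))·(u(x₀+2h) − u(x₀−2h)) + (1/(600h))·(u(x₀+3h) − u(x₀−3h)) − (1/2)·(u'(x₀−h) + u'(x₀+h)) − (1/20)·(u'(x₀−2h) + u'(x₀+2h)) − u'(x₀) = (h¹⁰/277200)·u⁽¹¹⁾(x₀) + o(h¹⁰). -/

import Mathlib

open Filter Topology Asymptotics

section Aux
open Finset

lemma comp_pow10 (R : ℝ → ℝ) (h : R =o[𝓝 (0:ℝ)] fun t : ℝ => t ^ (10:ℕ)) (a : ℝ) :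
    (fun h : ℝ => R (a * h)) =o[𝓝[>] (0:ℝ)] fun h : ℝ => h ^ (10:ℕ) := by
  have ht : Tendsto (fun h : ℝ => a * h) (𝓝[>] (0:ℝ)) (𝓝 0) := by
    have : Tendsto (fun h : ℝ => a * h) (𝓝 (0:ℝ)) (𝓝 0) := by
      simpa using (continuous_mul_left a).tendsto (0:ℝ)
    exact this.mono_left nhdsWithin_le_nhds
  have h1 := h.comp_tendsto ht
  simp only [Function.comp_def] at h1
  refine h1.trans_isBigO ?_
  have h2 : (fun h : ℝ => a ^ (10:ℕ) * h ^ (10:ℕ)) =O[𝓝[>] (0:ℝ)] fun h : ℝ => h ^ (10:ℕ) :=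
    isBigO_const_mul_self _ _ _
  exact h2.congr' (EventuallyEq.of_eq (funext fun h => (mul_pow a h 10).symm)) EventuallyEq.rfl

lemma comp_pow11_div (R : ℝ → ℝ) (h : R =o[𝓝 (0:ℝ)] fun t : ℝ => t ^ (11:ℕ)) (a : ℝ) :
    (fun h : ℝ => R (a * h) / h) =o[𝓝[>] (0:ℝ)] fun h : ℝ => h ^ (10:ℕ) := by
  have ht : Tendsto (fun h : ℝ => a * h) (𝓝[>] (0:ℝ)) (𝓝 0) := by
    have : Tendsto (fun h : ℝ => a * h) (𝓝 (0:ℝ)) (𝓝 0) := by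
      simpa using (continuous_mul_left a).tendsto (0:ℝ)
    exact this.mono_left nhdsWithin_le_nhds
  have h1 := h.comp_tendsto ht
  simp only [Function.comp_def] at h1
  have h1' : (fun h : ℝ => R (a * h)) =o[𝓝[>] (0:ℝ)] fun h : ℝ => h ^ (11:ℕ) := by
    refine h1.trans_isBigO ?_
    have h2 : (fun h : ℝ => a ^ (11:ℕ) * h ^ (11:ℕ)) =O[𝓝[>] (0:ℝ)] fun h : ℝ => h ^ (11:ℕ) :=
      isBigO_const_mul_self _ _ _
    exact h2.congr' (EventuallyEq.of_eq (funext fun h => (mul_pow a h 11).symm)) EventuallyEq.rfl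
  have h2 := h1'.mul_isBigO (isBigO_refl (fun h : ℝ => h⁻¹) (𝓝[>] (0:ℝ)))
  refine h2.congr' (EventuallyEq.of_eq (funext fun h => (div_eq_mul_inv _ _).symm)) ?_
  filter_upwards [self_mem_nhdsWithin] with h hh
  have : h ≠ 0 := ne_of_gt hh
  rw [pow_succ, mul_assoc, mul_inv_cancel₀ this, mul_one]

lemma taylor_peano (x₀ : ℝ) (s : Set ℝ) (ho : IsOpen s) (hx : x₀ ∈ s) :
    ∀ n : ℕ, 1 ≤ n → ∀ f : ℝ → ℝ, ContDiffOn ℝ n f s →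
      (fun t : ℝ => f (x₀ + t) -
          ∑ k ∈ Finset.range (n + 1), t ^ k / (k.factorial : ℝ) * iteratedDeriv k f x₀)
        =o[𝓝 0] fun t : ℝ => t ^ n := by
  intro n hn
  induction n, hn using Nat.le_induction with
  | base =>
    intro f hf
    have hd : HasDerivAt f (deriv f x₀) x₀ := by
      have : DifferentiableAt ℝ f x₀ :=
        (hf.contDiffAt (ho.mem_nhds hx)).differentiableAt (by simp)
      exact this.hasDerivAt
    have h1 : (fun x => f x - f x₀ - (x - x₀) * deriv f x₀) =o[𝓝 x₀] fun x => x - x₀ := by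
      simpa [smul_eq_mul] using hasDerivAt_iff_isLittleO.mp hd
    have ht : Filter.Tendsto (fun t : ℝ => x₀ + t) (𝓝 0) (𝓝 x₀) := by
      simpa using (continuous_add_left x₀).tendsto (0 : ℝ)
    have h2 := h1.comp_tendsto ht
    simp only [Function.comp_def] at h2
    have h3 : (fun t : ℝ => f (x₀ + t) - f x₀ - t * deriv f x₀) =o[𝓝 0] fun t : ℝ => t := by
      simpa using h2
    refine h3.congr (fun t => ?_) (fun t => by ring)
    simp [Finset.sum_range_succ, iteratedDeriv_one, Nat.factorial]
    ring
  | succ n hn IH =>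
    intro f hf
    have hdf : ContDiffOn ℝ n (deriv f) s := by
      refine hf.deriv_of_isOpen ho ?_
      exact_mod_cast le_rfl
    have hG := IH (deriv f) hdf
    set F : ℝ → ℝ := fun t => f (x₀ + t) -
        ∑ k ∈ Finset.range (n + 2), t ^ k / (k.factorial : ℝ) * iteratedDeriv k f x₀ with hF
    set G : ℝ → ℝ := fun t => deriv f (x₀ + t) -
        ∑ k ∈ Finset.range (n + 1), t ^ k / (k.factorial : ℝ) * iteratedDeriv k (deriv f) x₀
      with hGdef
    have hF0 : F 0 = 0 := by
      simp [hF, Finset.sum_range_succ']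
    have hFd : ∀ t : ℝ, x₀ + t ∈ s → HasDerivAt F (G t) t := by
      intro t hts
      have hft : HasDerivAt f (deriv f (x₀ + t)) (x₀ + t) := by
        have : DifferentiableAt ℝ f (x₀ + t) := by
          have := (hf.contDiffAt (ho.mem_nhds hts))
          exact this.differentiableAt (by simp)
        exact this.hasDerivAt
      have hcomp : HasDerivAt (fun t : ℝ => f (x₀ + t)) (deriv f (x₀ + t)) t := by
        have h2 : HasDerivAt (fun t : ℝ => x₀ + t) 1 t := by
          simpa using (hasDerivAt_id t).const_add x₀
        simpa [Function.comp_def] using HasDerivAt.comp t hft h2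
      have hsum : HasDerivAt
          (fun t : ℝ => ∑ k ∈ Finset.range (n + 2), t ^ k / (k.factorial : ℝ) * iteratedDeriv k f x₀)
          (∑ k ∈ Finset.range (n + 1), t ^ k / (k.factorial : ℝ) * iteratedDeriv (k + 1) f x₀) t := by
        have h1 : HasDerivAt
            (fun t : ℝ => ∑ k ∈ Finset.range (n + 2), t ^ k / (k.factorial : ℝ) * iteratedDeriv k f x₀)
            (∑ k ∈ Finset.range (n + 2), (k : ℝ) * t ^ (k - 1) / (k.factorial : ℝ) * iteratedDeriv k f x₀) t := by
          refine HasDerivAt.fun_sum fun k _ => ?_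
          simpa [div_eq_mul_inv, mul_assoc, mul_comm, mul_left_comm] using
            ((hasDerivAt_pow k t).const_mul ((k.factorial : ℝ)⁻¹ * iteratedDeriv k f x₀))
        convert h1 using 1
        rw [Finset.sum_range_succ' (fun k => (k : ℝ) * t ^ (k - 1) / (k.factorial : ℝ) * iteratedDeriv k f x₀) (n+1)]
        simp only [Nat.cast_zero, zero_mul, zero_div, Nat.factorial, add_zero]
        refine (Finset.sum_congr rfl fun k _ => ?_)
        have : ((k + 1 : ℕ).factorial : ℝ) = (k + 1 : ℝ) * (k.factorial : ℝ) := by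
          push_cast [Nat.factorial_succ]; ring
        field_simp [this]
        rw [Nat.add_sub_cancel]; push_cast; ring
      have hiter : ∀ k, iteratedDeriv k (deriv f) x₀ = iteratedDeriv (k + 1) f x₀ := by
        intro k; rw [iteratedDeriv_succ']
      have : G t = deriv f (x₀ + t) -
          ∑ k ∈ Finset.range (n + 1), t ^ k / (k.factorial : ℝ) * iteratedDeriv (k + 1) f x₀ := by
        simp [hGdef, hiter]
      rw [hF, this]
      exact hcomp.sub hsum
    -- now the little-o argument
    rw [isLittleO_iff]
    intro c hc
    have hGo := isLittleO_iff.mp hG hc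
    have hmem : ∀ᶠ t : ℝ in 𝓝 0, x₀ + t ∈ s := by
      have : Filter.Tendsto (fun t : ℝ => x₀ + t) (𝓝 0) (𝓝 x₀) := by
        simpa using (continuous_add_left x₀).tendsto (0 : ℝ)
      exact this.eventually (ho.eventually_mem hx)
    rcases Metric.eventually_nhds_iff_ball.mp (hGo.and hmem) with ⟨δ, hδ, hball⟩
    rw [Metric.eventually_nhds_iff_ball]
    refine ⟨δ, hδ, fun t htδ => ?_⟩
    have habs : ∀ z : ℝ, z ∈ Set.uIcc 0 t → |z| ≤ |t| := by
      intro z hz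
      rw [Set.uIcc_eq_union] at hz
      rcases hz with hz | hz
      · rcases hz with ⟨h1, h2⟩
        exact abs_le.mpr ⟨le_trans (neg_nonpos.mpr (abs_nonneg t)) h1, le_trans h2 (le_abs_self t)⟩
      · rcases hz with ⟨h1, h2⟩
        exact abs_le.mpr ⟨le_trans (neg_abs_le t) h1, le_trans h2 (abs_nonneg t)⟩
    have hzball : ∀ z : ℝ, z ∈ Set.uIcc 0 t → z ∈ Metric.ball (0:ℝ) δ := by
      intro z hz
      have := habs z hz
      simp only [Metric.mem_ball, Real.dist_eq, sub_zero] at htδ ⊢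
      exact lt_of_le_of_lt this htδ
    have hderivon : ∀ z ∈ Set.uIcc 0 t, HasDerivWithinAt F (G z) (Set.uIcc 0 t) z := by
      intro z hz
      exact (hFd z ((hball z (hzball z hz)).2)).hasDerivWithinAt
    have hbound : ∀ z ∈ Set.uIcc 0 t, ‖G z‖ ≤ c * |t| ^ n := by
      intro z hz
      have h1 := (hball z (hzball z hz)).1
      calc ‖G z‖ ≤ c * ‖z ^ n‖ := h1
        _ = c * |z| ^ n := by rw [Real.norm_eq_abs, abs_pow]
        _ ≤ c * |t| ^ n := by
            exact mul_le_mul_of_nonneg_left (pow_le_pow_left₀ (abs_nonneg z) (habs z hz) n) hc.le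
    have hmvt := Convex.norm_image_sub_le_of_norm_hasDerivWithin_le hderivon hbound
      (convex_uIcc 0 t) Set.left_mem_uIcc Set.right_mem_uIcc
    rw [hF0, sub_zero] at hmvt
    calc ‖F t‖ ≤ c * |t| ^ n * ‖t - 0‖ := hmvt
      _ = c * ‖t ^ (n + 1)‖ := by
          rw [sub_zero, Real.norm_eq_abs, Real.norm_eq_abs, abs_pow, pow_succ]; ring

end Aux

set_option maxHeartbeats 2000000 in
/-- Leading-order truncation error of the tenth-order compact FD scheme for
the first derivative. -/
theorem compact_fd10_first_deriv_lte (x₀ : ℝ) (u : ℝ → ℝ)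
    (s : Set ℝ) (hs : s ∈ 𝓝 x₀) (hu : ContDiffOn ℝ 11 u s) :
    (fun h : ℝ =>
        17 / (24 * h) * (u (x₀ + h) - u (x₀ - h)) +
        101 / (600 * h) * (u (x₀ + 2 * h) - u (x₀ - 2 * h)) +
        1 / (600 * h) * (u (x₀ + 3 * h) - u (x₀ - 3 * h)) -
        1 / 2 * (deriv u (x₀ - h) + deriv u (x₀ + h)) -
        1 / 20 * (deriv u (x₀ - 2 * h) + deriv u (x₀ + 2 * h)) -
        deriv u x₀ -
        h ^ 10 / 277200 * iteratedDeriv 11 u x₀)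
      =o[𝓝[>] 0] fun h : ℝ => h ^ 10 := by
  have hU : IsOpen (interior s) := isOpen_interior
  have hxU : x₀ ∈ interior s := mem_interior_iff_mem_nhds.mpr hs
  have huU : ContDiffOn ℝ 11 u (interior s) := hu.mono interior_subset
  have hq : ContDiffOn ℝ 10 (deriv u) (interior s) := huU.deriv_of_isOpen hU (by norm_num)
  have hA := taylor_peano x₀ _ hU hxU 11 (by norm_num) u huU
  have hB := taylor_peano x₀ _ hU hxU 10 (by norm_num) (deriv u) hq
  have E1 := comp_pow11_div _ hA 1
  have Em1 := comp_pow11_div _ hA (-1)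
  have E2 := comp_pow11_div _ hA 2
  have Em2 := comp_pow11_div _ hA (-2)
  have E3 := comp_pow11_div _ hA 3
  have Em3 := comp_pow11_div _ hA (-3)
  have Q1 := comp_pow10 _ hB 1
  have Qm1 := comp_pow10 _ hB (-1)
  have Q2 := comp_pow10 _ hB 2
  have Qm2 := comp_pow10 _ hB (-2)
  have big := ((((((E1.const_mul_left (17/24)).sub (Em1.const_mul_left (17/24))).add
      ((E2.const_mul_left (101/600)).sub (Em2.const_mul_left (101/600)))).add
      ((E3.const_mul_left (1/600)).sub (Em3.const_mul_left (1/600)))).sub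
      ((Qm1.add Q1).const_mul_left (1/2))).sub
      ((Qm2.add Q2).const_mul_left (1/20)))
  refine big.congr' ?_ EventuallyEq.rfl
  filter_upwards [self_mem_nhdsWithin] with h hh
  have hne : h ≠ 0 := ne_of_gt hh
  simp only [Finset.sum_range_succ, Finset.sum_range_zero, ← iteratedDeriv_succ']
  norm_num [iteratedDeriv_zero, iteratedDeriv_one, Nat.factorial]
  field_simp
  ring
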